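/- Let n ≥ 4096 be a natural number, let λ := ⌈log₂ n⌉ + 1 (with ⌈log₂ n⌉ = Nat.clog 2 n), and let r₁, …, r_ρ be natural numbers with 1 ≤ rᵢ ≤ 3λ for every i, with total size m := Σᵢ rᵢ. Then Σᵢ rᵢ · log₂(n / rᵢ) ≥ (m/2) · log₂ n, where log₂ denotes Real.logb 2. In particular, the entropy contribution of the runs of size at most 3λ is Ω(m·log n), so sorting them in O(m·log m) time is paid for by their contribution to the entropy of the array. -/

import Mathlib

lemma nine_sq_le_pow : ∀ j : ℕ, 9 * (j + 13)^2 ≤ 2^(j + 11) := by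
  intro j
  induction j with
  | zero => norm_num
  | succ j ih =>
    have h : 9 * (j + 1 + 13)^2 ≤ 2 * (9 * (j + 13)^2) := by nlinarith [sq_nonneg j, j.zero_le]
    calc 9 * (j + 1 + 13)^2 ≤ 2 * (9 * (j + 13)^2) := h
      _ ≤ 2 * 2^(j + 11) := by omega
      _ = 2^(j + 1 + 11) := by ring

/-- For `n ≥ 4096`, the entropy contribution of the short runs (those of size at most
`3λ` with `λ = ⌈log₂ n⌉ + 1`) is at least `(m/2)·log₂ n`, where `m` is their total
size. Hence sorting them in `O(m log m)` time is paid for by their contribution to the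
entropy of the array. -/
theorem short_runs_entropy_Omega (n ρ : ℕ) (hn : 4096 ≤ n) (r : Fin ρ → ℕ)
    (hr : ∀ i, 1 ≤ r i ∧ r i ≤ 3 * (Nat.clog 2 n + 1)) :
    ((∑ i, (r i : ℝ)) / 2) * Real.logb 2 (n : ℝ) ≤
      ∑ i, (r i : ℝ) * Real.logb 2 ((n : ℝ) / (r i : ℝ)) := by
  set k := Nat.clog 2 n with hk
  have hk12 : 12 ≤ k := by
    have : 11 < k := by
      rw [hk, Nat.lt_clog_iff_pow_lt (by norm_num)]
      omega
    omega
  -- 2^(k-1) < n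
  have hpow : 2^(k - 1) < n := by
    by_contra h
    push_neg at h
    have := (Nat.clog_le_iff_le_pow (by norm_num : 1 < 2)).mpr h
    omega
  -- key nat bound: (r i)^2 ≤ n
  have hkey : ∀ i, (r i)^2 ≤ n := by
    intro i
    have h1 : r i ≤ 3 * (k + 1) := (hr i).2
    have h2 : (r i)^2 ≤ 9 * (k + 1)^2 := by nlinarith
    have h3 : 9 * (k + 1)^2 ≤ 2^(k - 1) := by
      have := nine_sq_le_pow (k - 12)
      have hk' : k - 12 + 13 = k + 1 := by omega
      have hk'' : k - 12 + 11 = k - 1 := by omega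
      rwa [hk', hk''] at this
    omega
  rw [Finset.sum_div, Finset.sum_mul]
  apply Finset.sum_le_sum
  intro i _
  have hr1 : (1 : ℝ) ≤ (r i : ℝ) := by exact_mod_cast (hr i).1
  have hrpos : (0 : ℝ) < (r i : ℝ) := by linarith
  have hnpos : (0 : ℝ) < (n : ℝ) := by positivity
  have hlogr : Real.logb 2 (r i : ℝ) ≤ Real.logb 2 (n : ℝ) / 2 := by
    have hsq : ((r i : ℝ))^2 ≤ (n : ℝ) := by exact_mod_cast hkey i
    have := Real.logb_le_logb_of_le (b := 2) (by norm_num) (by positivity : (0:ℝ) < (r i:ℝ)^2) hsq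
    rw [Real.logb_pow] at this
    push_cast at this
    linarith
  have hdiv : Real.logb 2 ((n : ℝ) / (r i : ℝ)) =
      Real.logb 2 (n : ℝ) - Real.logb 2 (r i : ℝ) :=
    Real.logb_div (by positivity) (by positivity)
  rw [hdiv]
  have : Real.logb 2 (n : ℝ) / 2 ≤ Real.logb 2 (n : ℝ) - Real.logb 2 (r i : ℝ) := by
    linarith
  calc (r i : ℝ) / 2 * Real.logb 2 (n : ℝ) = (r i : ℝ) * (Real.logb 2 (n : ℝ) / 2) := by ring
    _ ≤ (r i : ℝ) * (Real.logb 2 (n : ℝ) - Real.logb 2 (r i : ℝ)) := by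
        apply mul_le_mul_of_nonneg_left this hrpos.le
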